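/- Let k = 2^m for a natural number m ≥ 1, and let 0 ≤ a < b ≤ 1 be reals. Define P^(2) = min { p : ⌊a·2^p⌋ < ⌊b·2^p⌋ } and P^(k) = min { p : ⌊a·k^p⌋ < ⌊b·k^p⌋ }. Then P^(k) = ⌈P^(2)/m⌉. -/

import Mathlib

theorem stmt_8 (m : ℕ) (hm : 1 ≤ m) (k : ℕ) (hkm : k = 2 ^ m)
    (a b : ℝ) (ha : 0 ≤ a) (hab : a < b) (hb : b ≤ 1)
    (P2 Pk : ℕ)
    (hP2 : P2 = sInf {p : ℕ | ⌊a * (2 : ℝ) ^ p⌋ < ⌊b * (2 : ℝ) ^ p⌋})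
    (hPk : Pk = sInf {p : ℕ | ⌊a * (k : ℝ) ^ p⌋ < ⌊b * (k : ℝ) ^ p⌋}) :
    (Pk : ℤ) = ⌈(P2 : ℚ) / (m : ℚ)⌉ := by
  have hba : (0:ℝ) < b - a := by linarith
  -- upward closedness in base 2
  have mono : ∀ p q : ℕ, p ≤ q → ⌊a * (2:ℝ)^p⌋ < ⌊b * (2:ℝ)^p⌋ →
      ⌊a * (2:ℝ)^q⌋ < ⌊b * (2:ℝ)^q⌋ := by
    intro p q hpq h
    obtain ⟨d, rfl⟩ := Nat.exists_eq_add_of_le hpq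
    set n : ℤ := ⌊b * (2:ℝ)^p⌋ with hn
    have h1 : a * (2:ℝ)^p < (n:ℝ) := by
      have h2 := Int.lt_floor_add_one (a * (2:ℝ)^p)
      have h3 : (⌊a * (2:ℝ)^p⌋ : ℝ) + 1 ≤ (n:ℝ) := by exact_mod_cast h
      linarith
    have h2 : (n:ℝ) ≤ b * (2:ℝ)^p := Int.floor_le _
    have hd : (0:ℝ) < (2:ℝ)^d := by positivity
    have g1 : a * (2:ℝ)^(p+d) < (((n * 2^d : ℤ)) : ℝ) := by
      push_cast
      rw [pow_add, ← mul_assoc]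
      exact mul_lt_mul_of_pos_right h1 hd
    have g2 : (((n * 2^d : ℤ)) : ℝ) ≤ b * (2:ℝ)^(p+d) := by
      push_cast
      rw [pow_add, ← mul_assoc]
      exact mul_le_mul_of_nonneg_right h2 hd.le
    calc ⌊a * (2:ℝ)^(p+d)⌋ < n * 2^d := Int.floor_lt.mpr g1
      _ ≤ ⌊b * (2:ℝ)^(p+d)⌋ := Int.le_floor.mpr g2
  -- nonemptiness
  obtain ⟨p0, hp0⟩ := pow_unbounded_of_one_lt (R := ℝ) (1 / (b - a)) one_lt_two
  have hp0' : (1:ℝ) < (b - a) * 2^p0 := by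
    rw [div_lt_iff₀ hba] at hp0; linarith
  have hmem0 : ⌊a * (2:ℝ)^p0⌋ < ⌊b * (2:ℝ)^p0⌋ := by
    have hlt : a * 2^p0 < b * 2^p0 - 1 := by nlinarith
    have h1 : a * 2^p0 < (⌊b * (2:ℝ)^p0⌋ : ℝ) := by
      have := Int.sub_one_lt_floor (b * 2^p0)
      linarith
    exact Int.floor_lt.mpr h1
  have hS2ne : {p : ℕ | ⌊a * (2:ℝ)^p⌋ < ⌊b * (2:ℝ)^p⌋}.Nonempty := ⟨p0, hmem0⟩
  have hP2mem : ⌊a * (2:ℝ)^P2⌋ < ⌊b * (2:ℝ)^P2⌋ := by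
    have := Nat.sInf_mem hS2ne
    rw [← hP2] at this
    exact this
  have hkr : (k:ℝ) = 2 ^ m := by rw [hkm]; push_cast; ring
  have hSk : ∀ p : ℕ, (⌊a * (k:ℝ)^p⌋ < ⌊b * (k:ℝ)^p⌋ ↔ P2 ≤ m * p) := by
    intro p
    have e : (k:ℝ)^p = (2:ℝ)^(m*p) := by rw [hkr, ← pow_mul]
    rw [e]
    constructor
    · intro h
      rw [hP2]
      exact Nat.sInf_le h
    · intro h
      exact mono P2 (m*p) h hP2mem
  set c : ℤ := ⌈(P2:ℚ)/(m:ℚ)⌉ with hc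
  have hc0 : 0 ≤ c := Int.ceil_nonneg (by positivity)
  have hmq : (0:ℚ) < (m:ℚ) := by exact_mod_cast hm
  have hchar : ∀ p : ℕ, (P2 ≤ m * p ↔ c.toNat ≤ p) := by
    intro p
    rw [Int.toNat_le, hc, Int.ceil_le, div_le_iff₀ hmq]
    push_cast
    rw [mul_comm]
    exact_mod_cast Iff.rfl
  have hSkset : {p : ℕ | ⌊a * (k:ℝ)^p⌋ < ⌊b * (k:ℝ)^p⌋} = Set.Ici c.toNat := by
    ext p
    simp only [Set.mem_setOf_eq, Set.mem_Ici, hSk p, hchar p]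
  rw [hPk, hSkset, csInf_Ici]
  exact Int.toNat_of_nonneg hc0
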